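/- Let f : [0,1] → [0,1] be continuous, U ⊆ [0,1] an interval with x ∈ U, λ(U) ≥ ε > 0 (where λ is Lebesgue measure/length), and n > 0 an integer. Then there exists an interval V with x ∈ V ⊆ U such that λ(f^i(V)) ≤ ε for all 0 ≤ i ≤ n, and λ(f^j(V)) = ε for some 0 ≤ j ≤ n. -/

import Mathlib

open Set Function MeasureTheory

lemma aux_iter (f : ℝ → ℝ) (hf : ContinuousOn f (Icc 0 1))
    (hm : MapsTo f (Icc 0 1) (Icc 0 1)) (i : ℕ) :
    ContinuousOn (f^[i]) (Icc 0 1) ∧ MapsTo (f^[i]) (Icc 0 1) (Icc 0 1) := by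
  induction i with
  | zero => simpa using ⟨continuousOn_id, mapsTo_id _⟩
  | succ k ih =>
    rw [Function.iterate_succ]
    exact ⟨ih.1.comp hf hm, ih.2.comp hm⟩

lemma aux_vol (g : ℝ → ℝ) (hg : ContinuousOn g (Icc 0 1)) (u v : ℝ) (huv : u ≤ v)
    (hsub : Icc u v ⊆ Icc 0 1) (V : Set ℝ) (hV1 : Ioo u v ⊆ V) (hV2 : V ⊆ Icc u v) :
    volume (g '' V) = ENNReal.ofReal (sSup (g '' Icc u v) - sInf (g '' Icc u v)) := by
  have hgc : ContinuousOn g (Icc u v) := hg.mono hsub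
  have himg := hgc.image_Icc huv
  have hvolJ : volume (g '' Icc u v)
      = ENNReal.ofReal (sSup (g '' Icc u v) - sInf (g '' Icc u v)) := by
    conv_lhs => rw [himg]
    rw [Real.volume_Icc]
  have hub : volume (g '' V) ≤ volume (g '' Icc u v) := measure_mono (image_mono hV2)
  rcases eq_or_lt_of_le huv with heq | hlt
  · subst heq
    have hsing : g '' Icc u u = {g u} := by rw [Icc_self, image_singleton]
    have h0 : sSup (g '' Icc u u) - sInf (g '' Icc u u) = 0 := by
      rw [hsing, csSup_singleton, csInf_singleton, sub_self]
    rw [h0, ENNReal.ofReal_zero]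
    refine le_antisymm ?_ zero_le
    calc volume (g '' V) ≤ volume (g '' Icc u u) := hub
      _ = 0 := by rw [hvolJ, h0, ENNReal.ofReal_zero]
  · have hclo : g '' Icc u v ⊆ closure (g '' Ioo u v) := by
      have hcl : Icc u v = closure (Ioo u v) := (closure_Ioo hlt.ne).symm
      have hgcc : ContinuousOn g (closure (Ioo u v)) := by rw [← hcl]; exact hgc
      calc g '' Icc u v = g '' closure (Ioo u v) := by rw [← hcl]
        _ ⊆ closure (g '' Ioo u v) := hgcc.image_closure
    have hconv : Convex ℝ (g '' Ioo u v) := by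
      have hpc : IsPreconnected (g '' Ioo u v) :=
        isPreconnected_Ioo.image g (hgc.mono Ioo_subset_Icc_self)
      exact convex_iff_ordConnected.mpr hpc.ordConnected
    have hfr : volume (frontier (g '' Ioo u v)) = 0 := hconv.addHaar_frontier volume
    have hclos_vol : volume (closure (g '' Ioo u v)) ≤ volume (g '' Ioo u v) := by
      calc volume (closure (g '' Ioo u v))
          = volume (g '' Ioo u v ∪ frontier (g '' Ioo u v)) := by
            rw [← closure_eq_self_union_frontier]
        _ ≤ volume (g '' Ioo u v) + volume (frontier (g '' Ioo u v)) := measure_union_le _ _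
        _ = volume (g '' Ioo u v) := by rw [hfr, add_zero]
    have hlb : volume (g '' Icc u v) ≤ volume (g '' V) :=
      calc volume (g '' Icc u v) ≤ volume (closure (g '' Ioo u v)) := measure_mono hclo
        _ ≤ volume (g '' Ioo u v) := hclos_vol
        _ ≤ volume (g '' V) := measure_mono (image_mono hV1)
    rw [← hvolJ]
    exact le_antisymm hub hlb

lemma aux_cont (g : ℝ → ℝ) (hg : ContinuousOn g (Icc 0 1)) (A B x0 : ℝ)
    (hA : 0 ≤ A) (hAx : A ≤ x0) (hxB : x0 ≤ B) (hB : B ≤ 1) :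
    ContinuousOn (fun t => sSup (g '' Icc (max A (x0 - t)) (min B (x0 + t)))) (Icc 0 1) := by
  set p : ℝ → ℝ := fun t => max A (x0 - t) with hpdef
  set q : ℝ → ℝ := fun t => min B (x0 + t) with hqdef
  have hpx : ∀ t ∈ Icc (0:ℝ) 1, p t ≤ x0 := fun t ht => max_le hAx (by linarith [ht.1])
  have hxq : ∀ t ∈ Icc (0:ℝ) 1, x0 ≤ q t := fun t ht => le_min hxB (by linarith [ht.1])
  have hsub : ∀ t ∈ Icc (0:ℝ) 1, Icc (p t) (q t) ⊆ Icc (0:ℝ) 1 := by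
    intro t ht y hy
    exact ⟨le_trans (le_trans hA (le_max_left _ _)) hy.1,
      le_trans hy.2 (le_trans (min_le_left _ _) hB)⟩
  have hpb : ∀ s t : ℝ, p s ≤ p t + |s - t| := by
    intro s t
    have h1 : t - s ≤ |s - t| := by rw [abs_sub_comm]; exact le_abs_self _
    have h2 : (0:ℝ) ≤ |s - t| := abs_nonneg _
    have h3 : x0 - t ≤ p t := le_max_right _ _
    have h4 : A ≤ p t := le_max_left _ _
    exact max_le (by linarith) (by linarith)
  have hqb : ∀ s t : ℝ, q s ≤ q t + |s - t| := by
    intro s t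
    have h1 : s - t ≤ |s - t| := le_abs_self _
    have h2 : (0:ℝ) ≤ |s - t| := abs_nonneg _
    have h3 : q t ≤ B := min_le_left _ _
    have h5 : q s ≤ min (B + |s - t|) (x0 + t + |s - t|) :=
      le_min (le_trans (min_le_left _ _) (by linarith))
        (le_trans (min_le_right _ _) (by linarith))
    have h6 : min (B + |s - t|) (x0 + t + |s - t|) = q t + |s - t| := by
      rcases le_total B (x0 + t) with h | h
      · rw [hqdef]; simp only []
        rw [min_eq_left (by linarith), min_eq_left h]
      · rw [hqdef]; simp only []
        rw [min_eq_right (by linarith), min_eq_right h]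
    linarith [h5, h6.le]
  have huc := isCompact_Icc.uniformContinuousOn_of_continuous hg
  rw [Metric.uniformContinuousOn_iff] at huc
  rw [Metric.continuousOn_iff]
  intro b hb ε hε
  obtain ⟨δ, hδ, hδ'⟩ := huc (ε/2) (by linarith)
  refine ⟨δ, hδ, ?_⟩
  intro a ha hab
  have key : ∀ s ∈ Icc (0:ℝ) 1, ∀ t ∈ Icc (0:ℝ) 1, dist s t < δ →
      sSup (g '' Icc (p s) (q s)) ≤ sSup (g '' Icc (p t) (q t)) + ε/2 := by
    intro s hs t ht hst
    have hne : (Icc (p s) (q s)).Nonempty := ⟨x0, hpx s hs, hxq s hs⟩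
    obtain ⟨y, hy, hySup⟩ := isCompact_Icc.exists_sSup_image_eq hne (hg.mono (hsub s hs))
    have hptqt : p t ≤ q t := le_trans (hpx t ht) (hxq t ht)
    set z := max (p t) (min y (q t)) with hzdef
    have hzmem : z ∈ Icc (p t) (q t) := ⟨le_max_left _ _, max_le hptqt (min_le_right _ _)⟩
    have hdst : |s - t| < δ := by rwa [Real.dist_eq] at hst
    have hdyz : dist y z < δ := by
      rw [Real.dist_eq]
      rcases lt_or_ge y (p t) with hc | hc
      · have hz : z = p t := by
          rw [hzdef, min_eq_left (le_trans hc.le hptqt), max_eq_left hc.le]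
        rw [hz]
        have := hpb t s
        have hys : p s ≤ y := hy.1
        rw [abs_sub_comm] at this
        rw [abs_of_nonpos (by linarith)]
        linarith
      · rcases le_or_gt y (q t) with hc2 | hc2
        · have hz : z = y := by rw [hzdef, min_eq_left hc2, max_eq_right hc]
          rw [hz, sub_self, abs_zero]; exact hδ
        · have hz : z = q t := by rw [hzdef, min_eq_right hc2.le, max_eq_right hptqt]
          rw [hz]
          have := hqb s t
          have hys : y ≤ q s := hy.2
          rw [abs_of_nonneg (by linarith)]
          linarith
    have hgy : dist (g y) (g z) < ε/2 :=
      hδ' y (hsub s hs hy) z (hsub t ht hzmem) hdyz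
    rw [Real.dist_eq, abs_sub_lt_iff] at hgy
    have hzle : g z ≤ sSup (g '' Icc (p t) (q t)) :=
      le_csSup (isCompact_Icc.image_of_continuousOn (hg.mono (hsub t ht))).bddAbove
        (mem_image_of_mem g hzmem)
    rw [hySup]
    linarith [hgy.1]
  have h1 := key a ha b hb hab
  have h2 := key b hb a ha (by rwa [dist_comm])
  rw [Real.dist_eq, abs_sub_lt_iff]
  constructor <;> linarith

theorem stmt_3 (f : ℝ → ℝ) (hf : ContinuousOn f (Icc 0 1))
    (hmaps : MapsTo f (Icc 0 1) (Icc 0 1))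
    (U : Set ℝ) (hU : U ⊆ Icc 0 1) (hUconn : U.OrdConnected)
    (x : ℝ) (hx : x ∈ U) (ε : ℝ) (hε : 0 < ε) (hUε : ENNReal.ofReal ε ≤ volume U)
    (n : ℕ) (hn : 0 < n) :
    ∃ V : Set ℝ, x ∈ V ∧ V ⊆ U ∧ V.OrdConnected ∧
      (∀ i ≤ n, volume (f^[i] '' V) ≤ ENNReal.ofReal ε) ∧
      ∃ j ≤ n, volume (f^[j] '' V) = ENNReal.ofReal ε := by
  set A := sInf U with hAdef
  set B := sSup U with hBdef
  have bddA : BddBelow U := ⟨0, fun y hy => (hU hy).1⟩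
  have bddB : BddAbove U := ⟨1, fun y hy => (hU hy).2⟩
  have hAx : A ≤ x := csInf_le bddA hx
  have hxB : x ≤ B := le_csSup bddB hx
  have hAB : A ≤ B := hAx.trans hxB
  have hA0 : 0 ≤ A := le_csInf ⟨x, hx⟩ fun y hy => (hU hy).1
  have hB1 : B ≤ 1 := csSup_le ⟨x, hx⟩ fun y hy => (hU hy).2
  have hIoo : Ioo A B ⊆ U := by
    intro y hy
    obtain ⟨u, hu, hu'⟩ := exists_lt_of_csInf_lt ⟨x, hx⟩ hy.1
    obtain ⟨v, hv, hv'⟩ := exists_lt_of_lt_csSup ⟨x, hx⟩ hy.2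
    exact hUconn.out hu hv ⟨hu'.le, hv'.le⟩
  have hUIcc : U ⊆ Icc A B := fun y hy => ⟨csInf_le bddA hy, le_csSup bddB hy⟩
  have hεBA : ε ≤ B - A := by
    have h1 : volume U ≤ ENNReal.ofReal (B - A) := by
      calc volume U ≤ volume (Icc A B) := measure_mono hUIcc
        _ = ENNReal.ofReal (B - A) := Real.volume_Icc
    exact (ENNReal.ofReal_le_ofReal_iff (by linarith)).mp (hUε.trans h1)
  -- the oscillation functions
  set D : ℕ → ℝ → ℝ := fun i t =>
    sSup (f^[i] '' Icc (max A (x - t)) (min B (x + t))) +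
      sSup ((fun y => -(f^[i] y)) '' Icc (max A (x - t)) (min B (x + t))) with hDdef
  have hDosc : ∀ (i : ℕ) (t : ℝ), D i t =
      sSup (f^[i] '' Icc (max A (x - t)) (min B (x + t))) -
        sInf (f^[i] '' Icc (max A (x - t)) (min B (x + t))) := by
    intro i t
    have himg : (fun y => -(f^[i] y)) '' Icc (max A (x - t)) (min B (x + t)) =
        -(f^[i] '' Icc (max A (x - t)) (min B (x + t))) := by
      rw [← Set.image_neg_eq_neg, Set.image_image]
    rw [hDdef]
    simp only []
    rw [himg, Real.sInf_def]
    ring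
  have hDcont : ∀ i : ℕ, ContinuousOn (D i) (Icc 0 1) := by
    intro i
    have hic := (aux_iter f hf hmaps i).1
    exact (aux_cont (f^[i]) hic A B x hA0 hAx hxB hB1).add
      (aux_cont (fun y => -(f^[i] y)) hic.neg A B x hA0 hAx hxB hB1)
  have hne : (Finset.range (n + 1)).Nonempty := Finset.nonempty_range_iff.mpr (Nat.succ_ne_zero n)
  set G : ℝ → ℝ := fun t => (Finset.range (n + 1)).sup' hne (fun i => D i t) with hGdef
  have hGcont : ContinuousOn G (Icc 0 1) :=
    ContinuousOn.finset_sup'_apply hne fun i _ => hDcont i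
  have hG0 : G 0 = 0 := by
    have hD0 : ∀ i : ℕ, D i 0 = 0 := by
      intro i
      rw [hDdef]
      simp only []
      rw [sub_zero, add_zero, max_eq_right hAx, min_eq_right hxB, Icc_self,
        image_singleton, image_singleton, csSup_singleton, csSup_singleton, add_neg_cancel]
    rw [hGdef]
    simp only [hD0]
    exact Finset.sup'_const hne 0
  have hG1 : ε ≤ G 1 := by
    have hx1 : x ≤ 1 := (hU hx).2
    have hx0 : 0 ≤ x := (hU hx).1
    have hD01 : D 0 1 = B - A := by
      rw [hDosc 0 1, max_eq_left (by linarith), min_eq_left (by linarith)]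
      simp only [Function.iterate_zero, Set.image_id]
      rw [csSup_Icc hAB, csInf_Icc hAB]
    have hle : D 0 1 ≤ G 1 := Finset.le_sup' (fun i => D i 1) (Finset.mem_range.mpr n.succ_pos)
    linarith
  obtain ⟨t, ht, hGt⟩ := intermediate_value_Icc zero_le_one hGcont (by rw [hG0]; exact ⟨hε.le, hG1⟩)
  set pt := max A (x - t) with hptdef
  set qt := min B (x + t) with hqtdef
  have hpx : pt ≤ x := max_le hAx (by linarith [ht.1])
  have hxq : x ≤ qt := le_min hxB (by linarith [ht.1])
  have hpq : pt ≤ qt := hpx.trans hxq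
  have hJ01 : Icc pt qt ⊆ Icc (0:ℝ) 1 := fun y hy =>
    ⟨le_trans (le_trans hA0 (le_max_left _ _)) hy.1,
      le_trans hy.2 (le_trans (min_le_left _ _) hB1)⟩
  have hIooV : Ioo pt qt ⊆ U ∩ Icc pt qt := by
    intro y hy
    refine ⟨hIoo ⟨lt_of_le_of_lt (le_max_left _ _) hy.1,
      lt_of_lt_of_le hy.2 (min_le_left _ _)⟩, hy.1.le, hy.2.le⟩
  have hvol : ∀ i : ℕ, volume (f^[i] '' (U ∩ Icc pt qt)) = ENNReal.ofReal (D i t) := by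
    intro i
    rw [aux_vol (f^[i]) (aux_iter f hf hmaps i).1 pt qt hpq hJ01 _ hIooV inter_subset_right,
      hDosc i t]
  refine ⟨U ∩ Icc pt qt, ⟨hx, hpx, hxq⟩, inter_subset_left, hUconn.inter ordConnected_Icc, ?_, ?_⟩
  · intro i hi
    rw [hvol i]
    refine ENNReal.ofReal_le_ofReal ?_
    have hle : D i t ≤ G t :=
      Finset.le_sup' (fun j => D j t) (Finset.mem_range.mpr (Nat.lt_succ_of_le hi))
    linarith [hGt]
  · obtain ⟨j, hj, hjeq⟩ := Finset.exists_mem_eq_sup' hne (fun i => D i t)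
    refine ⟨j, Nat.lt_succ_iff.mp (Finset.mem_range.mp hj), ?_⟩
    rw [hvol j]
    congr 1
    rw [← hjeq]
    exact hGt
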